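/- Let f : ℝⁿ → ℝ be differentiable with L-Lipschitz gradient, p ∈ (0,1), λ > 0, β > L/2. Define F(x,ε) = f(x) + λ·Σᵢ (|xᵢ| + εᵢ)^p for ε ∈ ℝⁿ with ε > 0. Suppose x^{k+1} minimizes x ↦ ⟨∇f(x^k), x − x^k⟩ + (β/2)‖x − x^k‖² + λ·Σᵢ wᵢ^k |xᵢ| where wᵢ^k = p(|xᵢ^k| + εᵢ^k)^{p−1}, and 0 < ε^{k+1} ≤ ε^k componentwise. Then F(x^{k+1}, ε^{k+1}) ≤ F(x^k, ε^k) − (β − L/2)·‖x^{k+1} − x^k‖². -/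

import Mathlib

open scoped RealInnerProductSpace


open scoped RealInnerProductSpace

-- descent lemma
lemma descent_lemma {E : Type*} [NormedAddCommGroup E] [InnerProductSpace ℝ E]
    [CompleteSpace E] (f : E → ℝ) (L : ℝ) (hL : 0 ≤ L) (hf : Differentiable ℝ f)
    (hlip : ∀ x y, ‖gradient f x - gradient f y‖ ≤ L * ‖x - y‖) (x y : E) :
    f y ≤ f x + ⟪gradient f x, y - x⟫ + L / 2 * ‖y - x‖ ^ 2 := by
  set d := y - x with hd
  have hderiv : ∀ t : ℝ, HasDerivAt (fun t : ℝ => f (x + t • d))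
      ⟪gradient f (x + t • d), d⟫ t := by
    intro t
    have h1 : HasDerivAt (fun t : ℝ => x + t • d) d t := by
      simpa using ((hasDerivAt_id t).smul_const d).const_add x
    have h2 := ((hf (x + t • d)).hasGradientAt.hasFDerivAt).comp_hasDerivAt t h1
    simpa [InnerProductSpace.toDual_apply_apply, Function.comp_def] using h2
  have hgcont : Continuous (gradient f) := by
    have : LipschitzWith (Real.toNNReal L) (gradient f) := by
      apply LipschitzWith.of_dist_le_mul
      intro a b
      simpa [dist_eq_norm, Real.coe_toNNReal L hL] using hlip a b
    exact this.continuous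
  have hcont : Continuous fun t : ℝ => ⟪gradient f (x + t • d), d⟫ := by
    apply Continuous.inner
    · exact hgcont.comp (by continuity)
    · exact continuous_const
  have hftc : ∫ t in (0:ℝ)..1, ⟪gradient f (x + t • d), d⟫ = f y - f x := by
    have := intervalIntegral.integral_eq_sub_of_hasDerivAt
      (f := fun t : ℝ => f (x + t • d)) (fun t _ => hderiv t)
      (hcont.intervalIntegrable 0 1)
    simpa [hd] using this
  have hbound : ∫ t in (0:ℝ)..1, ⟪gradient f (x + t • d), d⟫
      ≤ ∫ t in (0:ℝ)..1, (⟪gradient f x, d⟫ + L * t * ‖d‖ ^ 2) := by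
    apply intervalIntegral.integral_mono_on zero_le_one
      (hcont.intervalIntegrable 0 1)
      ((Continuous.intervalIntegrable (by continuity) 0 1))
    intro t ht
    have h1 : ⟪gradient f (x + t • d) - gradient f x, d⟫
        ≤ ‖gradient f (x + t • d) - gradient f x‖ * ‖d‖ := real_inner_le_norm _ _
    have h2 : ‖gradient f (x + t • d) - gradient f x‖ ≤ L * (t * ‖d‖) := by
      have := hlip (x + t • d) x
      simpa [norm_smul, abs_of_nonneg ht.1] using this
    have h3 : ⟪gradient f (x + t • d) - gradient f x, d⟫ ≤ L * t * ‖d‖ ^ 2 := by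
      calc ⟪gradient f (x + t • d) - gradient f x, d⟫ ≤ _ := h1
        _ ≤ L * (t * ‖d‖) * ‖d‖ := by
            apply mul_le_mul_of_nonneg_right h2 (norm_nonneg d)
        _ = L * t * ‖d‖ ^ 2 := by ring
    have := inner_sub_left (𝕜 := ℝ) (gradient f (x + t • d)) (gradient f x) d
    linarith [h3, this.symm.le, this.le]
  have hval : ∫ t in (0:ℝ)..1, (⟪gradient f x, d⟫ + L * t * ‖d‖ ^ 2)
      = ⟪gradient f x, d⟫ + L / 2 * ‖d‖ ^ 2 := by
    have heq : (fun t : ℝ => ⟪gradient f x, d⟫ + L * t * ‖d‖ ^ 2)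
        = fun t : ℝ => ⟪gradient f x, d⟫ + t * (L * ‖d‖ ^ 2) := by ext t; ring
    rw [heq, intervalIntegral.integral_add (intervalIntegrable_const)
      (by apply Continuous.intervalIntegrable; continuity),
      intervalIntegral.integral_mul_const, integral_id, intervalIntegral.integral_const]
    simp; ring
  have : f y - f x ≤ ⟪gradient f x, d⟫ + L / 2 * ‖d‖ ^ 2 := by
    rw [← hftc, ← hval]; exact hbound
  linarith

-- rpow tangent line inequality
lemma rpow_tangent {p a b : ℝ} (hp0 : 0 < p) (hp1 : p < 1) (ha : 0 < a) (hb : 0 < b) :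
    b ^ p ≤ a ^ p + p * a ^ (p - 1) * (b - a) := by
  set s : ℝ := b / a - 1 with hs
  have hs1 : -1 ≤ s := by
    have : 0 < b / a := div_pos hb ha
    simp [hs]; linarith
  have hbern := rpow_one_add_le_one_add_mul_self hs1 hp0.le hp1.le
  have h1s : 1 + s = b / a := by simp [hs]
  rw [h1s] at hbern
  have hap : (0:ℝ) < a ^ p := Real.rpow_pos_of_pos ha p
  have hmul := mul_le_mul_of_nonneg_left hbern hap.le
  have hleft : a ^ p * (b / a) ^ p = b ^ p := by
    rw [← Real.mul_rpow ha.le (by positivity)]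
    rw [mul_div_cancel₀ _ ha.ne']
  have hright : a ^ p * (1 + p * s) = a ^ p + p * a ^ (p - 1) * (b - a) := by
    have hap1 : a ^ (p - 1) = a ^ p / a := by
      rw [Real.rpow_sub ha, Real.rpow_one]
    rw [hap1, hs]
    field_simp
  rw [hleft, hright] at hmul
  exact hmul

theorem pirl1_smoothed_decrease (n : ℕ) (f : EuclideanSpace ℝ (Fin n) → ℝ)
    (L : ℝ) (hL : 0 ≤ L) (hf : Differentiable ℝ f)
    (hlip : ∀ x y, ‖gradient f x - gradient f y‖ ≤ L * ‖x - y‖)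
    (p lam β : ℝ) (hp0 : 0 < p) (hp1 : p < 1) (hlam : 0 < lam) (hβ : L / 2 < β)
    (F : EuclideanSpace ℝ (Fin n) → (Fin n → ℝ) → ℝ)
    (hF : ∀ x ε, F x ε = f x + lam * ∑ i, (|x i| + ε i) ^ p)
    (xk xkp : EuclideanSpace ℝ (Fin n)) (εk εkp : Fin n → ℝ)
    (hεk : ∀ i, 0 < εk i) (hεkp : ∀ i, 0 < εkp i) (hεle : ∀ i, εkp i ≤ εk i)
    (w : Fin n → ℝ) (hwdef : ∀ i, w i = p * (|xk i| + εk i) ^ (p - 1))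
    (hmin : ∀ x : EuclideanSpace ℝ (Fin n),
      inner ℝ (gradient f xk) (xkp - xk) + (β / 2) * ‖xkp - xk‖ ^ 2 + lam * ∑ i, w i * |xkp i|
        ≤ inner ℝ (gradient f xk) (x - xk) + (β / 2) * ‖x - xk‖ ^ 2 + lam * ∑ i, w i * |x i|) :
    F xkp εkp ≤ F xk εk - (β - L / 2) * ‖xkp - xk‖ ^ 2 := by
  set g : EuclideanSpace ℝ (Fin n) := gradient f xk with hg
  set G : ℝ := ⟪g, xkp - xk⟫ with hG
  set N : ℝ := ‖xkp - xk‖ ^ 2 with hN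
  set S1 : ℝ := ∑ i, w i * |xkp i| with hS1
  set S0 : ℝ := ∑ i, w i * |xk i| with hS0
  have hw : ∀ i, 0 ≤ w i := by
    intro i; rw [hwdef i]
    have : (0:ℝ) < |xk i| + εk i := by linarith [abs_nonneg (xk i), hεk i]
    positivity
  -- strong minimality
  have hkey : ∀ t : ℝ, t ∈ Set.Ioc (0:ℝ) 1 →
      G + β * N + lam * S1 ≤ lam * S0 + β / 2 * N * t := by
    intro t ht
    have h1t : (0:ℝ) ≤ 1 - t := by linarith [ht.2]
    have hmint := hmin (xkp + t • (xk - xkp))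
    have hxeq : xkp + t • (xk - xkp) - xk = (1 - t) • (xkp - xk) := by
      module
    have hin : ⟪g, xkp + t • (xk - xkp) - xk⟫ = (1 - t) * G := by
      rw [hxeq, real_inner_smul_right, hG]
    have hnorm : ‖xkp + t • (xk - xkp) - xk‖ ^ 2 = (1 - t) ^ 2 * N := by
      rw [hxeq, norm_smul, hN]
      rw [Real.norm_eq_abs, abs_of_nonneg h1t]
      ring
    have hsum : ∑ i, w i * |(xkp + t • (xk - xkp)) i| ≤ (1 - t) * S1 + t * S0 := by
      have : ∀ i ∈ Finset.univ, w i * |(xkp + t • (xk - xkp)) i|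
          ≤ w i * ((1 - t) * |xkp i| + t * |xk i|) := by
        intro i _
        apply mul_le_mul_of_nonneg_left _ (hw i)
        have happ : (xkp + t • (xk - xkp)) i = (1 - t) * xkp i + t * xk i := by
          simp [PiLp.add_apply, PiLp.smul_apply, PiLp.sub_apply, smul_eq_mul]
          ring
        rw [happ]
        calc |(1 - t) * xkp i + t * xk i| ≤ |(1 - t) * xkp i| + |t * xk i| := abs_add_le _ _
          _ = (1 - t) * |xkp i| + t * |xk i| := by
              rw [abs_mul, abs_mul, abs_of_nonneg h1t, abs_of_nonneg ht.1.le]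
      calc ∑ i, w i * |(xkp + t • (xk - xkp)) i|
          ≤ ∑ i, w i * ((1 - t) * |xkp i| + t * |xk i|) := Finset.sum_le_sum this
        _ = (1 - t) * S1 + t * S0 := by
            rw [hS1, hS0, Finset.mul_sum, Finset.mul_sum, ← Finset.sum_add_distrib]
            congr 1; ext i; ring
    rw [hin, hnorm] at hmint
    have h1 : G + β / 2 * N + lam * S1
        ≤ (1 - t) * G + β / 2 * ((1 - t) ^ 2 * N) + lam * ((1 - t) * S1 + t * S0) := by
      have := mul_le_mul_of_nonneg_left hsum hlam.le
      calc G + β / 2 * N + lam * S1 ≤ (1 - t) * G + β / 2 * ((1 - t) ^ 2 * N)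
            + lam * ∑ i, w i * |(xkp + t • (xk - xkp)) i| := by linarith [hmint]
        _ ≤ _ := by linarith [this]
    have h2 : t * (G + β * N + lam * S1 - lam * S0 - β / 2 * N * t) ≤ 0 := by
      nlinarith [h1]
    nlinarith [h2, ht.1]
  have hstrong : G + β * N + lam * S1 ≤ lam * S0 := by
    have htend : Filter.Tendsto (fun t : ℝ => lam * S0 + β / 2 * N * t) (nhdsWithin 0 (Set.Ioi 0))
        (nhds (lam * S0)) := by
      have : Filter.Tendsto (fun t : ℝ => lam * S0 + β / 2 * N * t) (nhds 0)
          (nhds (lam * S0 + β / 2 * N * 0)) := by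
        apply Filter.Tendsto.const_add
        exact (continuous_const.mul continuous_id).tendsto 0
      simpa using this.mono_left nhdsWithin_le_nhds
    refine ge_of_tendsto htend ?_
    filter_upwards [Ioc_mem_nhdsGT zero_lt_one] with t ht using hkey t ht
  -- descent lemma
  have hdesc : f xkp ≤ f xk + G + L / 2 * N := descent_lemma f L hL hf hlip xk xkp
  -- concavity
  have hconc : lam * ∑ i, (|xkp i| + εkp i) ^ p
      ≤ lam * ∑ i, (|xk i| + εk i) ^ p + (lam * S1 - lam * S0) := by
    have hterm : ∀ i ∈ Finset.univ, (|xkp i| + εkp i) ^ p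
        ≤ (|xk i| + εk i) ^ p + w i * (|xkp i| - |xk i|) := by
      intro i _
      have ha : (0:ℝ) < |xk i| + εk i := by linarith [abs_nonneg (xk i), hεk i]
      have hb : (0:ℝ) < |xkp i| + εkp i := by linarith [abs_nonneg (xkp i), hεkp i]
      have := rpow_tangent hp0 hp1 ha hb
      have hslope : p * (|xk i| + εk i) ^ (p - 1) * ((|xkp i| + εkp i) - (|xk i| + εk i))
          ≤ w i * (|xkp i| - |xk i|) := by
        rw [hwdef i]
        apply mul_le_mul_of_nonneg_left _
          (mul_nonneg hp0.le (Real.rpow_pos_of_pos ha _).le)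
        linarith [hεle i]
      linarith
    have hsum := Finset.sum_le_sum hterm
    have heq : ∑ i, ((|xk i| + εk i) ^ p + w i * (|xkp i| - |xk i|))
        = ∑ i, (|xk i| + εk i) ^ p + (S1 - S0) := by
      rw [Finset.sum_add_distrib, hS1, hS0, ← Finset.sum_sub_distrib]
      congr 1; congr 1; ext i; ring
    rw [heq] at hsum
    calc lam * ∑ i, (|xkp i| + εkp i) ^ p
        ≤ lam * (∑ i, (|xk i| + εk i) ^ p + (S1 - S0)) :=
          mul_le_mul_of_nonneg_left hsum hlam.le
      _ = lam * ∑ i, (|xk i| + εk i) ^ p + (lam * S1 - lam * S0) := by ring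
  rw [hF, hF]
  linarith [hstrong, hdesc, hconc]
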